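/- Let F be a field with a valuation v : F → Γ₀ into a linearly ordered commutative group with zero, and let π ∈ F satisfy v(π) > 1. Let g ∈ SL₂(F) have entries g = [[x, y], [z, w]] (so xw − yz = 1). Then g lies in the double coset I · W' · I, where W' = [[0, π⁻¹], [−π, 0]] (the determinant-1 antidiagonal representative) and I is the Iwahori subgroup, if and only if v(x) ≤ v(π), v(y) ≤ v(π), v(z) = v(π), and v(w) ≤ v(π). -/

import Mathlib

/-- Membership in the Iwahori subgroup of `SL₂` of a valued field: a matrix of determinant `1`,
entries of valuation at most `1`, and lower-left entry of valuation strictly less than `1`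
(i.e. a matrix over the valuation ring whose residue is upper triangular). -/
def IwahoriMem {F Γ₀ : Type*} [Field F] [LinearOrderedCommGroupWithZero Γ₀]
    (v : Valuation F Γ₀) (m : Matrix (Fin 2) (Fin 2) F) : Prop :=
  m.det = 1 ∧ v (m 0 0) ≤ 1 ∧ v (m 0 1) ≤ 1 ∧ v (m 1 0) < 1 ∧ v (m 1 1) ≤ 1

private theorem iwahori_diag_val {F Γ₀ : Type*} [Field F] [LinearOrderedCommGroupWithZero Γ₀]
    (v : Valuation F Γ₀) (a d b c : F) (hdet : a*d - b*c = 1) (hb : v b ≤ 1) (hc : v c < 1)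
    (ha : v a ≤ 1) (hd : v d ≤ 1) : v a = 1 ∧ v d = 1 := by
  have hbc : v (b*c) < 1 := by
    calc v (b*c) = v b * v c := v.map_mul _ _
    _ ≤ 1 * v c := by gcongr
    _ = v c := one_mul _
    _ < 1 := hc
  have h1 : v (a*d - b*c) = 1 := by rw [hdet]; exact v.map_one
  have had : v a * v d = 1 := by
    rw [← v.map_mul, ← sub_add_cancel (a*d) (b*c),
      v.map_add_eq_of_lt_left (by rw [h1]; exact hbc), h1]
  have h2 : 1 ≤ v a := by calc 1 = v a * v d := had.symm
                            _ ≤ v a * 1 := by gcongr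
                            _ = v a := mul_one _
  have h3 : 1 ≤ v d := by calc 1 = v a * v d := had.symm
                            _ ≤ 1 * v d := by gcongr
                            _ = v d := one_mul _
  exact ⟨le_antisymm ha h2, le_antisymm hd h3⟩

private theorem entry_bound {F Γ₀ : Type*} [Field F] [LinearOrderedCommGroupWithZero Γ₀]
    (v : Valuation F Γ₀) (π p q r s : F) (hπ : 1 < v π)
    (hp : v p ≤ 1) (hq : v q ≤ 1) (hr : v r ≤ 1) (hs : v s ≤ 1) :
    v (-(p * π * q) + r * π⁻¹ * s) ≤ v π := by
  refine le_trans (v.map_add _ _) (max_le ?_ ?_)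
  · rw [v.map_neg, v.map_mul, v.map_mul]
    calc v p * v π * v q ≤ 1 * v π * 1 := by gcongr
      _ = v π := by rw [one_mul, mul_one]
  · rw [v.map_mul, v.map_mul, map_inv₀]
    calc v r * (v π)⁻¹ * v s ≤ 1 * (v π)⁻¹ * 1 := by gcongr
      _ = (v π)⁻¹ := by rw [one_mul, mul_one]
      _ ≤ 1 := inv_le_one_of_one_le₀ hπ.le
      _ ≤ v π := hπ.le

/-- Let `g = [[x, y], [z, w]] ∈ SL₂(F)` and `v(π) > 1`.  Then
`g ∈ I · [[0, π⁻¹], [−π, 0]] · I` iff `v(x) ≤ v(π)`, `v(y) ≤ v(π)`, `v(z) = v(π)` and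
`v(w) ≤ v(π)`. -/
theorem mem_iwahori_double_coset_antidiag_inv_iff
    {F Γ₀ : Type*} [Field F] [LinearOrderedCommGroupWithZero Γ₀]
    (v : Valuation F Γ₀) (π : F) (hπ : 1 < v π)
    (x y z w : F) (hdet : x * w - y * z = 1) :
    (∃ i₁ i₂ : Matrix (Fin 2) (Fin 2) F, IwahoriMem v i₁ ∧ IwahoriMem v i₂ ∧
        !![x, y; z, w] = i₁ * !![0, π⁻¹; -π, 0] * i₂) ↔
      v x ≤ v π ∧ v y ≤ v π ∧ v z = v π ∧ v w ≤ v π := by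
  have hπ0 : π ≠ 0 := by
    intro h; rw [h, v.map_zero] at hπ; exact absurd hπ (not_lt.2 zero_le_one)
  have hπv : (0 : Γ₀) < v π := lt_trans zero_lt_one hπ
  constructor
  · rintro ⟨i₁, i₂, ⟨hdet₁, ha, hb, hc, hd⟩, ⟨hdet₂, ha', hb', hc', hd'⟩, heq⟩
    rw [Matrix.det_fin_two] at hdet₁ hdet₂
    obtain ⟨hva, hvd⟩ := iwahori_diag_val v _ _ _ _ hdet₁ hb hc ha hd
    obtain ⟨hva', hvd'⟩ := iwahori_diag_val v _ _ _ _ hdet₂ hb' hc' ha' hd'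
    have hx := congr_fun (congr_fun heq 0) 0
    have hy := congr_fun (congr_fun heq 0) 1
    have hz := congr_fun (congr_fun heq 1) 0
    have hw := congr_fun (congr_fun heq 1) 1
    simp [Matrix.mul_apply, Fin.sum_univ_succ] at hx hy hz hw
    refine ⟨?_, ?_, ?_, ?_⟩
    · rw [hx]; exact entry_bound v π _ _ _ _ hπ hb ha' ha hc'.le
    · rw [hy]; exact entry_bound v π _ _ _ _ hπ hb hb' ha hd'
    · rw [hz]
      have h1 : v (-(i₁ 1 1 * π * i₂ 0 0)) = v π := by
        rw [v.map_neg, v.map_mul, v.map_mul, hvd, hva', one_mul, mul_one]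
      have h2 : v (i₁ 1 0 * π⁻¹ * i₂ 1 0) < v π := by
        rw [v.map_mul, v.map_mul, map_inv₀]
        calc v (i₁ 1 0) * (v π)⁻¹ * v (i₂ 1 0)
            ≤ 1 * (v π)⁻¹ * 1 := mul_le_mul' (mul_le_mul' hc.le le_rfl) hc'.le
          _ = (v π)⁻¹ := by rw [one_mul, mul_one]
          _ ≤ 1 := inv_le_one_of_one_le₀ hπ.le
          _ < v π := hπ
      rw [v.map_add_eq_of_lt_left (by rw [h1]; exact h2), h1]
    · rw [hw]; exact entry_bound v π _ _ _ _ hπ hd hb' hc.le hd'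
  · rintro ⟨hx, hy, hz, hw⟩
    have hz0 : z ≠ 0 := by
      intro h; rw [h, v.map_zero] at hz
      exact absurd hπv (by rw [← hz]; exact lt_irrefl 0)
    have hvz : (0 : Γ₀) < v z := hz ▸ hπv
    refine ⟨!![1, x/z; 0, 1], !![-(z * π⁻¹), -(w * π⁻¹); 0, -(π * z⁻¹)], ?_, ?_, ?_⟩
    · refine ⟨by simp [Matrix.det_fin_two], ?_, ?_, ?_, ?_⟩
      · show v 1 ≤ 1; exact le_of_eq v.map_one
      · show v (x/z) ≤ 1
        rw [div_eq_mul_inv, v.map_mul, map_inv₀, hz]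
        calc v x * (v π)⁻¹ ≤ v π * (v π)⁻¹ := by gcongr
          _ = 1 := mul_inv_cancel₀ hπv.ne'
      · show v 0 < 1; rw [v.map_zero]; exact zero_lt_one
      · show v 1 ≤ 1; exact le_of_eq v.map_one
    · refine ⟨by simp [Matrix.det_fin_two]; field_simp, ?_, ?_, ?_, ?_⟩
      · show v (-(z * π⁻¹)) ≤ 1
        rw [v.map_neg, v.map_mul, map_inv₀, hz, mul_inv_cancel₀ hπv.ne']
      · show v (-(w * π⁻¹)) ≤ 1
        rw [v.map_neg, v.map_mul, map_inv₀]
        calc v w * (v π)⁻¹ ≤ v π * (v π)⁻¹ := by gcongr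
          _ = 1 := mul_inv_cancel₀ hπv.ne'
      · show v 0 < 1; rw [v.map_zero]; exact zero_lt_one
      · show v (-(π * z⁻¹)) ≤ 1
        rw [v.map_neg, v.map_mul, map_inv₀, ← hz, mul_inv_cancel₀ hvz.ne']
    · ext i j
      fin_cases i <;> fin_cases j <;> simp [Matrix.mul_apply, Fin.sum_univ_succ]
      · field_simp
      · field_simp
        linear_combination (-1 : F) * hdet
      · field_simp
      · field_simp
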